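/- Let m be a positive integer, X = {⊥} ∪ {0,1}^m, let μ put probability mass 1/3 on ⊥ and spread the remaining 2/3 uniformly over {0,1}^m, and let D consist of, for every parity function f : {0,1}^m → {0,1} (i.e., f(x) = ⊕_{i∈S} x_i for some S ⊆ {1,…,m}), the distinguisher d_f with d_f(⊥) = 1 and d_f(x) = (−1)^{f(x)} for all x ∈ {0,1}^m. For a function f : {0,1}^m → {0,1}, define the predictor p_f : X → [0,1] by p_f(⊥) = 1/2 and p_f(x) = (1 + (−1)^{f(x)})/2 for x ∈ {0,1}^m. Let p : X → [0,1] be any predictor and let L = { f : {0,1}^m → {0,1} : ‖p_f − p‖_{μ,D} ≤ 1/6 + 1/8 }. If p(⊥) ≤ 1/2, then L contains at most 64 parity functions; similarly, if p(⊥) ≥ 1/2, then L contains at most 64 anti-parity functions (functions of the form x ↦ 1 ⊕ f(x) for a parity function f). -/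

import Mathlib

open scoped ENNReal Pointwise

noncomputable section

namespace OI

/-- Expectation of a real-valued function under a probability mass function. -/
def pexp {α : Type*} (q : PMF α) (f : α → ℝ) : ℝ := ∑' a, (q a).toReal * f a

/-- Inner product of two functions w.r.t. the distribution `μ`. -/
def inn {X : Type*} (μ : PMF X) (f g : X → ℝ) : ℝ := pexp μ fun x => f x * g x

/-- Dual Minkowski (semi)norm of `f` w.r.t. the class `F`. -/
def dnorm {X : Type*} (μ : PMF X) (F : Set (X → ℝ)) (f : X → ℝ) : ℝ :=
  sSup ((fun g => |inn μ f g|) '' F)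

/-- `C` is an ε-covering of `G` w.r.t. the seminorm defined by `F`. -/
def IsCover {X : Type*} (μ : PMF X) (F G : Set (X → ℝ)) (ε : ℝ) (C : Set (X → ℝ)) : Prop :=
  C ⊆ G ∧ ∀ g ∈ G, ∃ c ∈ C, dnorm μ F (g - c) ≤ ε

/-- Covering number `N_{μ,F}(G, ε)` (`⊤` if no finite covering exists). -/
def covN {X : Type*} (μ : PMF X) (F G : Set (X → ℝ)) (ε : ℝ) : ℕ∞ :=
  ⨅ (C : Set (X → ℝ)) (_ : IsCover μ F G ε C), C.encard

/-- Base-2 logarithm of an extended natural number (junk value on `⊤`). -/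
def elog2 (N : ℕ∞) : ℝ := Real.logb 2 (N.toNat : ℝ)

/-- Bernoulli distribution on `Bool` with mean (the truncation to `[0,1]` of) `r`. -/
def bern (r : ℝ) : PMF Bool := PMF.bernoulli (min (Real.toNNReal r) 1) (min_le_right _ _)

/-- The distribution `μ_p` of individual-outcome pairs. -/
def exDist {X : Type*} (μ : PMF X) (p : X → ℝ) : PMF (X × Bool) :=
  μ.bind fun x => (bern (p x)).map fun o => (x, o)

/-- `n` i.i.d. samples from `q`. -/
def iid {α : Type*} (q : PMF α) : (n : ℕ) → PMF (Fin n → α)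
  | 0 => PMF.pure Fin.elim0
  | n + 1 => (iid q n).bind fun v => q.map fun a => Fin.cons a v

/-- Probability of an event under a PMF. -/
def prob {α : Type*} (q : PMF α) (E : Set α) : ℝ≥0∞ := q.toOuterMeasure E

/-- A (possibly randomized) `n`-sample learner. -/
abbrev Learner (X : Type*) (n : ℕ) := (Fin n → X × Bool) → PMF (X → ℝ)

/-- Distribution of the learner output on `n` i.i.d. samples from `μ_{p*}`. -/
def outDist {X : Type*} (μ : PMF X) (pstar : X → ℝ) {n : ℕ} (A : Learner X n) :
    PMF (X → ℝ) :=
  (iid (exDist μ pstar) n).bind A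

/-- `p` is a predictor, i.e. takes values in `[0,1]`. -/
def Predictor {X : Type*} (p : X → ℝ) : Prop := ∀ x, p x ∈ Set.Icc (0 : ℝ) 1

/-- `d` takes values in `[-1,1]`. -/
def Dist1 {X : Type*} (d : X → ℝ) : Prop := ∀ x, d x ∈ Set.Icc (-1 : ℝ) 1

/-- The class `[0,1]^X` of all predictors. -/
def allPred (X : Type*) : Set (X → ℝ) := {p | Predictor p}

/-- The learner `A` succeeds for target `pstar`: with probability at least `1 - δ` it outputs
a predictor whose maximum distinguishing advantage w.r.t. `pstar` over `D` is at most `ε`. -/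
def Achieves {X : Type*} (μ : PMF X) (D : Set (X → ℝ)) (ε δ : ℝ) (pstar : X → ℝ) {n : ℕ}
    (A : Learner X n) : Prop :=
  ENNReal.ofReal (1 - δ) ≤
    prob (outDist μ pstar A) {p | Predictor p ∧ dnorm μ D (p - pstar) ≤ ε}

/-- The agnostic benchmark `inf_{p' ∈ P} ‖p' - pstar‖_{μ,D}`. -/
def agTarget {X : Type*} (μ : PMF X) (P D : Set (X → ℝ)) (pstar : X → ℝ) : ℝ :=
  sInf ((fun p' => dnorm μ D (p' - pstar)) '' P)

/-- The learner `A` succeeds agnostically for target `pstar`. -/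
def AchievesAg {X : Type*} (μ : PMF X) (P D : Set (X → ℝ)) (ε δ : ℝ) (pstar : X → ℝ) {n : ℕ}
    (A : Learner X n) : Prop :=
  ENNReal.ofReal (1 - δ) ≤
    prob (outDist μ pstar A)
      {p | Predictor p ∧ dnorm μ D (p - pstar) ≤ agTarget μ P D pstar + ε}

/-- Distribution-specific realizable OI learner. -/
def DSRL {X : Type*} (μ : PMF X) (P D : Set (X → ℝ)) (ε δ : ℝ) (n : ℕ)
    (A : Learner X n) : Prop :=
  ∀ pstar ∈ P, Achieves μ D ε δ pstar A

/-- Distribution-specific agnostic OI learner. -/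
def DSAL {X : Type*} (μ : PMF X) (P D : Set (X → ℝ)) (ε δ : ℝ) (n : ℕ)
    (A : Learner X n) : Prop :=
  ∀ pstar : X → ℝ, Predictor pstar → AchievesAg μ P D ε δ pstar A

/-- Distribution-free realizable OI learner. -/
def DFRL {X : Type*} (P D : Set (X → ℝ)) (ε δ : ℝ) (n : ℕ) (A : Learner X n) : Prop :=
  ∀ μ : PMF X, DSRL μ P D ε δ n A

/-- Distribution-free agnostic OI learner. -/
def DFAL {X : Type*} (P D : Set (X → ℝ)) (ε δ : ℝ) (n : ℕ) (A : Learner X n) : Prop :=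
  ∀ μ : PMF X, DSAL μ P D ε δ n A

/-- Sample complexity of distribution-specific realizable OI. -/
def SAMPDSR {X : Type*} (μ : PMF X) (P D : Set (X → ℝ)) (ε δ : ℝ) : ℕ∞ :=
  ⨅ (n : ℕ) (_ : ∃ A : Learner X n, DSRL μ P D ε δ n A), (n : ℕ∞)

/-- Sample complexity of distribution-specific agnostic OI. -/
def SAMPDSA {X : Type*} (μ : PMF X) (P D : Set (X → ℝ)) (ε δ : ℝ) : ℕ∞ :=
  ⨅ (n : ℕ) (_ : ∃ A : Learner X n, DSAL μ P D ε δ n A), (n : ℕ∞)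

/-- Sample complexity of distribution-free realizable OI. -/
def SAMPDFR {X : Type*} (P D : Set (X → ℝ)) (ε δ : ℝ) : ℕ∞ :=
  ⨅ (n : ℕ) (_ : ∃ A : Learner X n, DFRL P D ε δ n A), (n : ℕ∞)

/-- Sample complexity of distribution-free agnostic OI. -/
def SAMPDFA {X : Type*} (P D : Set (X → ℝ)) (ε δ : ℝ) : ℕ∞ :=
  ⨅ (n : ℕ) (_ : ∃ A : Learner X n, DFAL P D ε δ n A), (n : ℕ∞)

/-- The points `x 0, …, x (n-1)` are `γ`-fat shattered by `F`. -/
def Shatters {X : Type*} (F : Set (X → ℝ)) (γ : ℝ) {n : ℕ} (x : Fin n → X) : Prop :=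
  ∃ r : Fin n → ℝ, ∀ b : Fin n → Bool, ∃ f ∈ F,
    ∀ i, γ ≤ (if b i then (1 : ℝ) else -1) * (f (x i) - r i)

/-- The `γ`-fat-shattering dimension of `F`. -/
def fatDim {X : Type*} (F : Set (X → ℝ)) (γ : ℝ) : ℕ∞ :=
  ⨆ (n : ℕ) (_ : ∃ x : Fin n → X, Shatters F γ x), (n : ℕ∞)

end OI


open OI

/-- The domain `X = {⊥} ∪ {0,1}^m`, with `none` playing the role of `⊥`. -/
abbrev Cube (m : ℕ) := Option (Fin m → Bool)

/-- The distribution `μ` putting mass `1/3` on `⊥` and `2/3` uniformly on the cube. -/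
def cubeDist (m : ℕ) : PMF (Cube m) :=
  (bern (2 / 3)).bind fun b =>
    if b then (PMF.uniformOfFintype (Fin m → Bool)).map some else PMF.pure none

/-- The parity function associated with `S ⊆ {1,…,m}`: `v ↦ ⊕_{i∈S} v_i`. -/
def parityFun (m : ℕ) (S : Finset (Fin m)) : (Fin m → Bool) → Bool :=
  fun v => decide (Odd (S.filter fun i => v i = true).card)

/-- The parity distinguisher associated with `S ⊆ {1,…,m}`: it maps `⊥` to `1` and `v` in the
cube to `(−1)^{⊕_{i∈S} v_i}`. -/
def parityD (m : ℕ) (S : Finset (Fin m)) : Cube m → ℝ :=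
  fun x => x.elim 1 fun v => (-1 : ℝ) ^ (S.filter fun i => v i = true).card

/-- The class of all parity distinguishers. -/
def parityClass (m : ℕ) : Set (Cube m → ℝ) := Set.range (parityD m)

/-- For `f : {0,1}^m → {0,1}`, the predictor `p_f` with `p_f(⊥) = 1/2` and
`p_f(v) = (1 + (−1)^{f(v)})/2` on the cube. -/
def predOf (m : ℕ) (f : (Fin m → Bool) → Bool) : Cube m → ℝ :=
  fun x => x.elim (1 / 2) fun v => (1 + (-1 : ℝ) ^ (if f v then 1 else 0)) / 2

section St18Aux
open Finset

variable {m : ℕ}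

/-! ### Characters on the Boolean cube -/

def chi (S : Finset (Fin m)) (v : Fin m → Bool) : ℝ :=
  (-1) ^ (S.filter fun i => v i = true).card

lemma chi_eq_prod (S : Finset (Fin m)) (v : Fin m → Bool) :
    chi S v = ∏ i, (if i ∈ S then (if v i then (-1:ℝ) else 1) else 1) := by
  rw [Finset.prod_ite_mem, Finset.univ_inter, Finset.prod_ite, Finset.prod_const,
    Finset.prod_const, one_pow, mul_one, chi]

lemma chi_sq (S : Finset (Fin m)) (v : Fin m → Bool) : chi S v * chi S v = 1 := by
  rw [chi, ← pow_add]
  exact Even.neg_one_pow ⟨_, rfl⟩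

lemma sum_chi_mul_chi (S T : Finset (Fin m)) :
    ∑ v : Fin m → Bool, chi S v * chi T v = if S = T then (2:ℝ)^m else 0 := by
  have h : ∀ v : Fin m → Bool, chi S v * chi T v =
      ∏ i, ((if i ∈ S then (if v i then (-1:ℝ) else 1) else 1) *
            (if i ∈ T then (if v i then (-1:ℝ) else 1) else 1)) := by
    intro v; rw [chi_eq_prod, chi_eq_prod, ← Finset.prod_mul_distrib]
  simp_rw [h]
  have := Finset.sum_prod_piFinset (Finset.univ : Finset Bool)
    (fun (i : Fin m) (b : Bool) => ((if i ∈ S then (if b then (-1:ℝ) else 1) else 1) *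
            (if i ∈ T then (if b then (-1:ℝ) else 1) else 1)))
  rw [Fintype.piFinset_univ] at this
  rw [this]
  have hfac : ∀ i : Fin m, (∑ b : Bool, ((if i ∈ S then (if b then (-1:ℝ) else 1) else 1) *
      (if i ∈ T then (if b then (-1:ℝ) else 1) else 1))) =
      if (i ∈ S ↔ i ∈ T) then 2 else 0 := by
    intro i
    by_cases hS : i ∈ S <;> by_cases hT : i ∈ T <;> simp [hS, hT] <;> norm_num
  simp_rw [hfac]
  by_cases hST : S = T
  · subst hST; simp
  · obtain ⟨i, hi⟩ : ∃ i, ¬(i ∈ S ↔ i ∈ T) := by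
      by_contra hc
      push_neg at hc
      exact hST (Finset.ext fun i => (hc i))
    rw [if_neg hST]
    exact Finset.prod_eq_zero (Finset.mem_univ i) (by rw [if_neg hi])

lemma chi_empty (v : Fin m → Bool) : chi (∅ : Finset (Fin m)) v = 1 := by simp [chi]

lemma sum_chi (S : Finset (Fin m)) :
    ∑ v : Fin m → Bool, chi S v = if S = ∅ then (2:ℝ)^m else 0 := by
  have := sum_chi_mul_chi S (∅ : Finset (Fin m))
  simp_rw [chi_empty, mul_one] at this
  exact this

/-! ### The distribution `cubeDist` -/

lemma enn13 : (1:ℝ≥0∞) - 2/3 = 1/3 := by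
  rw [ENNReal.sub_eq_of_eq_add (by simp [ENNReal.div_eq_top])]
  rw [← ENNReal.add_div, ENNReal.eq_div_iff (by norm_num) (by norm_num)]
  norm_num

lemma bern23 : bern (2/3) = PMF.bernoulli (2/3) (by rw [div_le_one₀ (by norm_num)]; norm_num) := by
  have : min (Real.toNNReal (2/3)) 1 = 2/3 := by
    rw [min_eq_left]
    · rw [Real.toNNReal_div (by norm_num)]; norm_num
    · rw [Real.toNNReal_le_one]; norm_num
  simp [bern, this]

lemma cubeDist_none (m : ℕ) : cubeDist m none = 1/3 := by
  rw [cubeDist, PMF.bind_apply, tsum_bool, bern23]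
  simp only [PMF.bernoulli_apply, Bool.cond_true, Bool.cond_false, if_true, if_false,
    Bool.false_eq_true, PMF.pure_apply]
  rw [PMF.map_apply]
  have : ∀ a : Fin m → Bool, ((none : Cube m) = some a) = False := by simp
  simp only [this, if_false]
  rw [tsum_zero, mul_one, mul_zero, add_zero]
  rw [ENNReal.coe_sub, ENNReal.coe_div (by norm_num)]; norm_num; rw [← one_div]; exact enn13

lemma cubeDist_some (m : ℕ) (v : Fin m → Bool) :
    cubeDist m (some v) = 2/3 * (1 / 2^m) := by
  rw [cubeDist, PMF.bind_apply, tsum_bool, bern23]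
  simp only [PMF.bernoulli_apply, Bool.cond_true, Bool.cond_false, if_true, if_false,
    Bool.false_eq_true, PMF.pure_apply]
  rw [PMF.map_apply]
  rw [tsum_eq_single v (by intro b hb; rw [if_neg]; simpa using (Ne.symm hb))]
  rw [if_pos rfl, PMF.uniformOfFintype_apply]
  have : (Fintype.card (Fin m → Bool) : ℝ≥0∞) = 2^m := by
    simp [Fintype.card_fun]
  have h2 : ((some v : Cube m) = none) = False := by simp
  simp only [h2, if_false, mul_zero, zero_add, this, one_div]
  rw [ENNReal.coe_div (by norm_num)]; norm_num

lemma pexp_cubeDist (m : ℕ) (g : Cube m → ℝ) :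
    pexp (cubeDist m) g =
      1/3 * g none + 2/3 * ((1/2^m) * ∑ v : Fin m → Bool, g (some v)) := by
  rw [pexp, tsum_fintype]
  rw [show (univ : Finset (Cube m)) = insertNone univ from univ_option _]
  rw [Finset.sum_insertNone]
  rw [cubeDist_none]
  have h13 : ((1:ℝ≥0∞)/3).toReal = 1/3 := by
    rw [ENNReal.toReal_div]; norm_num
  have h2 : ∀ v : Fin m → Bool, ((cubeDist m (some v))).toReal = 2/3 * (1/2^m) := by
    intro v
    rw [cubeDist_some, ENNReal.toReal_mul, ENNReal.toReal_div, ENNReal.toReal_div,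
      ENNReal.toReal_pow]
    norm_num
  simp_rw [h2, h13]
  rw [Finset.mul_sum, Finset.mul_sum]
  congr 1
  refine Finset.sum_congr rfl fun v _ => by ring

/-! ### Inner products with parity distinguishers -/

lemma parityD_none (S : Finset (Fin m)) : parityD m S none = 1 := rfl

lemma parityD_some (S : Finset (Fin m)) (v : Fin m → Bool) :
    parityD m S (some v) = chi S v := rfl

lemma inn_parityD (F : Cube m → ℝ) (S : Finset (Fin m)) :
    inn (cubeDist m) F (parityD m S) =
      1/3 * F none + 2/3 * ((1/2^m) * ∑ v : Fin m → Bool, F (some v) * chi S v) := by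
  rw [inn, pexp_cubeDist]
  simp_rw [parityD_none, parityD_some, mul_one]

lemma abs_inn_le_dnorm (F : Cube m → ℝ) (S : Finset (Fin m)) :
    |inn (cubeDist m) F (parityD m S)| ≤ dnorm (cubeDist m) (parityClass m) F := by
  refine le_csSup ?_ ⟨parityD m S, ⟨S, rfl⟩, rfl⟩
  exact ((Set.finite_range (parityD m)).image _).bddAbove

lemma predOf_none (f : (Fin m → Bool) → Bool) : predOf m f none = 1/2 := rfl

lemma predOf_parity_some (S : Finset (Fin m)) (v : Fin m → Bool) :
    predOf m (parityFun m S) (some v) = (1 + chi S v)/2 := by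
  show (1 + (-1 : ℝ) ^ (if parityFun m S v then 1 else 0)) / 2 = _
  rcases Nat.even_or_odd ((S.filter fun i => v i = true).card) with h | h
  · have : parityFun m S v = false := by
      simp [parityFun, Nat.not_odd_iff_even.mpr h]
    rw [this, chi, h.neg_one_pow]
    norm_num
  · have : parityFun m S v = true := by simp [parityFun, h]
    rw [this, chi, h.neg_one_pow]
    norm_num

lemma predOf_antiparity_some (S : Finset (Fin m)) (v : Fin m → Bool) :
    predOf m (fun w => !(parityFun m S w)) (some v) = (1 - chi S v)/2 := by
  show (1 + (-1 : ℝ) ^ (if !parityFun m S v then 1 else 0)) / 2 = _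
  rcases Nat.even_or_odd ((S.filter fun i => v i = true).card) with h | h
  · have : parityFun m S v = false := by
      simp [parityFun, Nat.not_odd_iff_even.mpr h]
    rw [this, chi, h.neg_one_pow]
    norm_num
  · have : parityFun m S v = true := by simp [parityFun, h]
    rw [this, chi, h.neg_one_pow]
    norm_num

/-- The normalized Fourier coefficient of `p` on the cube. -/
def fc (m : ℕ) (p : Cube m → ℝ) (S : Finset (Fin m)) : ℝ :=
  (∑ v : Fin m → Bool, p (some v) * chi S v) / 2^m

lemma inn_parity_sub (p : Cube m → ℝ) (S : Finset (Fin m)) :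
    inn (cubeDist m) (predOf m (parityFun m S) - p) (parityD m S) =
      1/3 * (1/2 - p none) +
        2/3 * ((if S = ∅ then (1:ℝ)/2 else 0) + 1/2 - fc m p S) := by
  rw [inn_parityD]
  have hnone : (predOf m (parityFun m S) - p) none = 1/2 - p none := by
    simp [predOf_none]
  have hsome : ∀ v, (predOf m (parityFun m S) - p) (some v) * chi S v =
      chi S v / 2 + (chi S v * chi S v) / 2 - p (some v) * chi S v := by
    intro v
    have : (predOf m (parityFun m S) - p) (some v) = (1 + chi S v)/2 - p (some v) := by
      simp [predOf_parity_some]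
    rw [this]; ring
  rw [hnone]
  simp_rw [hsome, chi_sq]
  rw [Finset.sum_sub_distrib, Finset.sum_add_distrib, ← Finset.sum_div, sum_chi,
    Finset.sum_const, Finset.card_univ]
  have hcard : (Fintype.card (Fin m → Bool) : ℝ) = 2^m := by
    simp [Fintype.card_fun]
  congr 1
  rw [fc]
  have h2m : (0:ℝ) < 2^m := by positivity
  field_simp
  simp only [Fintype.card_fun, Fintype.card_bool, Fintype.card_fin, Nat.cast_pow, Nat.cast_ofNat]
  by_cases hS : S = ∅ <;> simp only [hS, if_true, if_false] <;> ring

lemma inn_antiparity_sub (p : Cube m → ℝ) (S : Finset (Fin m)) :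
    inn (cubeDist m) (predOf m (fun w => !(parityFun m S w)) - p) (parityD m S) =
      1/3 * (1/2 - p none) +
        2/3 * ((if S = ∅ then (1:ℝ)/2 else 0) - 1/2 - fc m p S) := by
  rw [inn_parityD]
  have hnone : (predOf m (fun w => !(parityFun m S w)) - p) none = 1/2 - p none := by
    simp [predOf_none]
  have hsome : ∀ v, (predOf m (fun w => !(parityFun m S w)) - p) (some v) * chi S v =
      chi S v / 2 - (chi S v * chi S v) / 2 - p (some v) * chi S v := by
    intro v
    have : (predOf m (fun w => !(parityFun m S w)) - p) (some v)
        = (1 - chi S v)/2 - p (some v) := by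
      simp [predOf_antiparity_some]
    rw [this]; ring
  rw [hnone]
  simp_rw [hsome, chi_sq]
  rw [Finset.sum_sub_distrib, Finset.sum_sub_distrib, ← Finset.sum_div, sum_chi,
    Finset.sum_const, Finset.card_univ
    ]
  have hcard : (Fintype.card (Fin m → Bool) : ℝ) = 2^m := by
    simp [Fintype.card_fun]
  congr 1
  rw [fc]
  have h2m : (0:ℝ) < 2^m := by positivity
  field_simp
  simp only [Fintype.card_fun, Fintype.card_bool, Fintype.card_fin, Nat.cast_pow, Nat.cast_ofNat]
  by_cases hS : S = ∅ <;> simp only [hS, if_true, if_false] <;> ring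

end St18Aux
section St18Aux3
open Finset
variable {m : ℕ}

lemma bessel (q : (Fin m → Bool) → ℝ) (F : Finset (Finset (Fin m))) :
    ∑ S ∈ F, ((∑ v : Fin m → Bool, q v * chi S v) / 2^m)^2 ≤
      (∑ v : Fin m → Bool, (q v)^2) / 2^m := by
  set N : ℝ := 2^m with hNdef
  have hN : (0:ℝ) < N := by positivity
  set b : Finset (Fin m) → ℝ := fun S => ∑ v : Fin m → Bool, q v * chi S v with hb
  set r : (Fin m → Bool) → ℝ := fun v => ∑ S ∈ F, b S * chi S v with hr
  have h1 : ∑ v : Fin m → Bool, q v * r v = ∑ S ∈ F, (b S)^2 := by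
    simp_rw [hr, Finset.mul_sum]
    rw [Finset.sum_comm]
    refine Finset.sum_congr rfl fun S _ => ?_
    have hre : ∀ x, q x * (b S * chi S x) = b S * (q x * chi S x) := fun x => by ring
    rw [Finset.sum_congr rfl fun x _ => hre x, ← Finset.mul_sum, sq]
  have h2 : ∑ v : Fin m → Bool, r v * r v = N * ∑ S ∈ F, (b S)^2 := by
    have hrv : ∀ v, r v * r v =
        ∑ S ∈ F, ∑ T ∈ F, (b S * b T) * (chi S v * chi T v) := by
      intro v
      rw [hr, Finset.sum_mul_sum]
      exact Finset.sum_congr rfl fun S _ => Finset.sum_congr rfl fun T _ => by ring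
    simp_rw [hrv]
    rw [Finset.sum_comm]
    have : ∀ S ∈ F, ∑ v : Fin m → Bool, ∑ T ∈ F, (b S * b T) * (chi S v * chi T v)
        = N * (b S)^2 := by
      intro S hS
      rw [Finset.sum_comm]
      have hT : ∀ T ∈ F, ∑ v : Fin m → Bool, (b S * b T) * (chi S v * chi T v)
          = if S = T then b S * b T * N else 0 := by
        intro T _
        rw [← Finset.mul_sum, sum_chi_mul_chi]
        by_cases h : S = T <;> simp [h, hNdef]
      rw [Finset.sum_congr rfl hT, Finset.sum_ite_eq, if_pos hS]
      ring
    rw [Finset.sum_congr rfl this, ← Finset.mul_sum]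
  have e1 : ∀ v, (q v - r v / N)^2 =
      (q v)^2 - (2/N)*(q v * r v) + (1/N^2)*(r v * r v) := by
    intro v; field_simp; ring
  have E : ∑ v : Fin m → Bool, (q v - r v / N)^2 =
      ∑ v : Fin m → Bool, (q v)^2 - (2/N) * ∑ S ∈ F, (b S)^2
        + (1/N^2) * (N * ∑ S ∈ F, (b S)^2) := by
    rw [Finset.sum_congr rfl fun v _ => e1 v, Finset.sum_add_distrib,
      Finset.sum_sub_distrib, ← Finset.mul_sum, ← Finset.mul_sum, h1, h2]
  have h0 : 0 ≤ ∑ v : Fin m → Bool, (q v - r v / N)^2 :=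
    Finset.sum_nonneg fun _ _ => sq_nonneg _
  rw [E] at h0
  have hinv : (1/N^2) * (N * ∑ S ∈ F, (b S)^2) = (1/N) * ∑ S ∈ F, (b S)^2 := by
    field_simp
  rw [hinv] at h0
  have h2N : (2/N) * ∑ S ∈ F, (b S)^2 = 2 * ((1/N) * ∑ S ∈ F, (b S)^2) := by ring
  rw [h2N] at h0
  have h3 : (1/N) * ∑ S ∈ F, (b S)^2 ≤ ∑ v : Fin m → Bool, (q v)^2 := by linarith
  have h4 := mul_le_mul_of_nonneg_left h3 (sq_nonneg N)
  have hfinal : ∑ S ∈ F, (b S / N)^2 ≤ (∑ v : Fin m → Bool, (q v)^2) / N := by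
    simp_rw [div_pow]
    rw [← Finset.sum_div, div_le_div_iff₀ (by positivity) hN]
    calc (∑ S ∈ F, (b S)^2) * N = N^2 * ((1/N) * ∑ S ∈ F, (b S)^2) := by
            field_simp
          _ ≤ N^2 * ∑ v : Fin m → Bool, (q v)^2 := h4
          _ = (∑ v : Fin m → Bool, (q v)^2) * N^2 := by ring
  exact hfinal

end St18Aux3
section St18Aux4
open Finset
variable {m : ℕ}

lemma counting (a : Finset (Fin m) → ℝ) (F : Finset (Finset (Fin m)))
    (hB : ∑ S ∈ insert ∅ F, (a S)^2 ≤ a ∅)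
    (h1 : ∀ S ∈ F, S ≠ ∅ → 1/16 ≤ |a S|)
    (hem : ∅ ∈ F → (9/16 ≤ a ∅ ∨ a ∅ ≤ 7/16)) :
    F.card ≤ 64 := by
  classical
  set E := F.erase ∅ with hE
  have hEe : insert ∅ F = insert ∅ E := by
    ext x; by_cases hx : x = ∅ <;> simp [hE, hx]
  have hsplit : ∑ S ∈ insert ∅ F, (a S)^2 = (a ∅)^2 + ∑ S ∈ E, (a S)^2 := by
    rw [hEe, Finset.sum_insert (Finset.notMem_erase _ _)]
  have hlow : (E.card : ℝ) * (1/256) ≤ ∑ S ∈ E, (a S)^2 := by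
    have := Finset.card_nsmul_le_sum E (fun S => (a S)^2) (1/256) ?_
    · simpa [nsmul_eq_mul] using this
    · intro S hS
      have hSF := Finset.mem_of_mem_erase hS
      have hSne := Finset.ne_of_mem_erase hS
      have habs := h1 S hSF hSne
      calc (1:ℝ)/256 = (1/16)^2 := by norm_num
      _ ≤ |a S|^2 := by
            apply pow_le_pow_left₀ (by norm_num) habs
      _ = (a S)^2 := sq_abs _
  have hkey : (a ∅)^2 + (E.card:ℝ)*(1/256) ≤ a ∅ := by
    rw [hsplit] at hB; linarith
  by_cases hmem : ∅ ∈ F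
  · have hc : F.card = E.card + 1 := by
      rw [hE, Finset.card_erase_of_mem hmem]
      have : 1 ≤ F.card := Finset.card_pos.mpr ⟨∅, hmem⟩
      omega
    have hle : (E.card:ℝ) ≤ 63 := by
      rcases hem hmem with h | h
      · nlinarith [mul_nonneg (by linarith : (0:ℝ) ≤ a ∅ - 9/16)
          (by linarith : (0:ℝ) ≤ a ∅ - 7/16)]
      · nlinarith [mul_nonneg (by linarith : (0:ℝ) ≤ 9/16 - a ∅)
          (by linarith : (0:ℝ) ≤ 7/16 - a ∅)]
    have : E.card ≤ 63 := by exact_mod_cast hle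
    omega
  · have hEF : E = F := Finset.erase_eq_of_notMem hmem
    rw [hEF] at hkey
    have hle : (F.card:ℝ) ≤ 64 := by nlinarith [sq_nonneg (a ∅ - 1/2)]
    exact_mod_cast hle

lemma fc_empty_eq (p : Cube m → ℝ) :
    fc m p ∅ = (∑ v : Fin m → Bool, p (some v)) / 2^m := by
  simp [fc, chi_empty]

lemma bessel_pred (p : Cube m → ℝ) (hp : Predictor p) (F : Finset (Finset (Fin m))) :
    ∑ S ∈ F, (fc m p S)^2 ≤ fc m p ∅ := by
  calc ∑ S ∈ F, (fc m p S)^2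
      ≤ (∑ v : Fin m → Bool, (p (some v))^2)/2^m := bessel _ F
    _ ≤ (∑ v : Fin m → Bool, p (some v))/2^m := by
        have hnum : ∑ v : Fin m → Bool, (p (some v))^2 ≤ ∑ v : Fin m → Bool, p (some v) := by
          refine Finset.sum_le_sum fun v _ => ?_
          obtain ⟨h0, h1⟩ := hp (some v)
          nlinarith
        have h2m : (0:ℝ) ≤ 2^m := by positivity
        exact div_le_div_of_nonneg_right hnum h2m
    _ = fc m p ∅ := (fc_empty_eq p).symm

lemma parity_case (p : Cube m → ℝ) (hp : Predictor p) (hple : p none ≤ 1/2)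
    (F : Finset (Finset (Fin m)))
    (hF : ∀ S ∈ F,
      dnorm (cubeDist m) (parityClass m) (predOf m (parityFun m S) - p) ≤ 1/6 + 1/8) :
    F.card ≤ 64 := by
  have key : ∀ S ∈ F, (if S = ∅ then (1:ℝ)/2 else 0) + 1/16 ≤ fc m p S := by
    intro S hS
    have h1 := abs_inn_le_dnorm (predOf m (parityFun m S) - p) S
    have h3 : inn (cubeDist m) (predOf m (parityFun m S) - p) (parityD m S) ≤ 1/6+1/8 :=
      le_trans (le_abs_self _) (le_trans h1 (hF S hS))
    rw [inn_parity_sub] at h3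
    by_cases hSe : S = ∅ <;> simp only [hSe, if_true, if_false] at h3 ⊢ <;> linarith
  refine counting (fc m p) F (bessel_pred p hp _) ?_ ?_
  · intro S hS hSne
    have := key S hS
    rw [if_neg hSne] at this
    exact le_trans (by linarith) (le_abs_self _)
  · intro hmem
    left
    have := key ∅ hmem
    rw [if_pos rfl] at this
    linarith

lemma antiparity_case (p : Cube m → ℝ) (hp : Predictor p) (hple : 1/2 ≤ p none)
    (F : Finset (Finset (Fin m)))
    (hF : ∀ S ∈ F,
      dnorm (cubeDist m) (parityClass m)
        (predOf m (fun w => !(parityFun m S w)) - p) ≤ 1/6 + 1/8) :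
    F.card ≤ 64 := by
  have key : ∀ S ∈ F, fc m p S ≤ (if S = ∅ then (1:ℝ)/2 else 0) - 1/16 := by
    intro S hS
    have h1 := abs_inn_le_dnorm (predOf m (fun w => !(parityFun m S w)) - p) S
    have h3 : -inn (cubeDist m) (predOf m (fun w => !(parityFun m S w)) - p) (parityD m S)
        ≤ 1/6+1/8 :=
      le_trans (neg_le_abs _) (le_trans h1 (hF S hS))
    rw [inn_antiparity_sub] at h3
    by_cases hSe : S = ∅ <;> simp only [hSe, if_true, if_false] at h3 ⊢ <;> linarith
  refine counting (fc m p) F (bessel_pred p hp _) ?_ ?_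
  · intro S hS hSne
    have := key S hS
    rw [if_neg hSne] at this
    exact le_trans (by linarith) (neg_le_abs _)
  · intro hmem
    right
    have := key ∅ hmem
    rw [if_pos rfl] at this
    linarith

end St18Aux4
/-- let `L = {f : ‖p_f − p‖_{μ,D} ≤ 1/6 + 1/8}` for the parity distinguisher
class `D` and the distribution `μ` above. If `p(⊥) ≤ 1/2` then `L` contains at most `64`
parity functions, and if `p(⊥) ≥ 1/2` then `L` contains at most `64` anti-parity functions. -/
theorem statement_18 (m : ℕ) (hm : 0 < m) (p : Cube m → ℝ) (hp : Predictor p) :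
    (p none ≤ 1 / 2 →
      {f : (Fin m → Bool) → Bool |
        dnorm (cubeDist m) (parityClass m) (predOf m f - p) ≤ 1 / 6 + 1 / 8 ∧
          ∃ S : Finset (Fin m), f = parityFun m S}.ncard ≤ 64) ∧
    (1 / 2 ≤ p none →
      {f : (Fin m → Bool) → Bool |
        dnorm (cubeDist m) (parityClass m) (predOf m f - p) ≤ 1 / 6 + 1 / 8 ∧
          ∃ S : Finset (Fin m), f = fun v => !(parityFun m S v)}.ncard ≤ 64) := by
  constructor
  · intro hple
    classical
    have himg : {f : (Fin m → Bool) → Bool |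
        dnorm (cubeDist m) (parityClass m) (predOf m f - p) ≤ 1 / 6 + 1 / 8 ∧
          ∃ S : Finset (Fin m), f = parityFun m S} =
        (parityFun m) '' {S : Finset (Fin m) |
          dnorm (cubeDist m) (parityClass m) (predOf m (parityFun m S) - p) ≤ 1/6 + 1/8} := by
      ext f
      constructor
      · rintro ⟨hd, S, rfl⟩; exact ⟨S, hd, rfl⟩
      · rintro ⟨S, hd, rfl⟩; exact ⟨hd, S, rfl⟩
    rw [himg]
    refine le_trans (Set.ncard_image_le (Set.toFinite _)) ?_
    have hset : {S : Finset (Fin m) |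
        dnorm (cubeDist m) (parityClass m) (predOf m (parityFun m S) - p) ≤ 1/6 + 1/8} =
        ↑(Finset.univ.filter fun S : Finset (Fin m) =>
          dnorm (cubeDist m) (parityClass m) (predOf m (parityFun m S) - p) ≤ 1/6 + 1/8) := by
      ext S; simp
    rw [hset, Set.ncard_coe_finset]
    exact parity_case p hp hple _ (fun S hS => (Finset.mem_filter.mp hS).2)
  · intro hple
    classical
    have himg : {f : (Fin m → Bool) → Bool |
        dnorm (cubeDist m) (parityClass m) (predOf m f - p) ≤ 1 / 6 + 1 / 8 ∧
          ∃ S : Finset (Fin m), f = fun v => !(parityFun m S v)} =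
        (fun S : Finset (Fin m) => (fun v => !(parityFun m S v))) ''
          {S : Finset (Fin m) |
          dnorm (cubeDist m) (parityClass m)
            (predOf m (fun v => !(parityFun m S v)) - p) ≤ 1/6 + 1/8} := by
      ext f
      constructor
      · rintro ⟨hd, S, rfl⟩; exact ⟨S, hd, rfl⟩
      · rintro ⟨S, hd, rfl⟩; exact ⟨hd, S, rfl⟩
    rw [himg]
    refine le_trans (Set.ncard_image_le (Set.toFinite _)) ?_
    have hset : {S : Finset (Fin m) |
        dnorm (cubeDist m) (parityClass m)
          (predOf m (fun v => !(parityFun m S v)) - p) ≤ 1/6 + 1/8} =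
        ↑(Finset.univ.filter fun S : Finset (Fin m) =>
          dnorm (cubeDist m) (parityClass m)
            (predOf m (fun v => !(parityFun m S v)) - p) ≤ 1/6 + 1/8) := by
      ext S; simp
    rw [hset, Set.ncard_coe_finset]
    exact antiparity_case p hp hple _ (fun S hS => (Finset.mem_filter.mp hS).2)
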